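/- Let Z be an N×N complex matrix, α a real number, and ψ ∈ ℂᴺ a vector with Z *ᵥ ψ = (α : ℂ) • ψ. Set s := √(α² + 1) and define w : Fin N ⊕ Fin N → ℂ by w := Sum.elim ψ (((α + s : ℝ) : ℂ) • ψ). Then fromBlocks(−Z, 1, 1, Z) *ᵥ w = ((s : ℝ) : ℂ) • w. Likewise, with w' := Sum.elim ψ (((α − s : ℝ) : ℂ) • ψ), one has fromBlocks(−Z, 1, 1, Z) *ᵥ w' = ((−s : ℝ) : ℂ) • w'. -/
import Mathlib


open Matrix

theorem stmt_17 {N : ℕ} (Z : Matrix (Fin N) (Fin N) ℂ) (α : ℝ) (ψ : Fin N → ℂ)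
    (hψ : Z *ᵥ ψ = (α : ℂ) • ψ)
    (s : ℝ) (hs : s = Real.sqrt (α ^ 2 + 1))
    (w w' : Fin N ⊕ Fin N → ℂ)
    (hw : w = Sum.elim ψ (((α + s : ℝ) : ℂ) • ψ))
    (hw' : w' = Sum.elim ψ (((α - s : ℝ) : ℂ) • ψ)) :
    fromBlocks (-Z) 1 1 Z *ᵥ w = ((s : ℝ) : ℂ) • w ∧
    fromBlocks (-Z) 1 1 Z *ᵥ w' = ((-s : ℝ) : ℂ) • w' := by
  have hs2 : (s : ℂ) ^ 2 = (α : ℂ) ^ 2 + 1 := by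
    have : s ^ 2 = α ^ 2 + 1 := by
      rw [hs]; exact Real.sq_sqrt (by positivity)
    exact_mod_cast this
  subst hw hw'
  constructor <;>
  · rw [fromBlocks_mulVec]
    funext x
    cases x with
    | inl i =>
        simp [neg_mulVec, mulVec_smul, hψ, smul_smul, Complex.ofReal_add,
          Complex.ofReal_sub, Complex.ofReal_neg]
        ring
    | inr i =>
        simp [neg_mulVec, mulVec_smul, hψ, smul_smul, Complex.ofReal_add,
          Complex.ofReal_sub, Complex.ofReal_neg]
        linear_combination (-(ψ i)) * hs2
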